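/- Fix p' ∈ (0,1), t ≥ 1 a natural number, and k a multiple of t+1. As w̄ → ∞, the generalized ShBF_M false positive rate f(w̄) = (1-p')^{k/(t+1)} · f_group(w̄)^{k/(t+1)} converges to (1-p')^k, where f_group(w̄) = (1/t)(1-p')²·[(1-p')^t - b(w̄)^t]/[(1-p') - b(w̄)] + p'·b(w̄)^t with b(w̄) = 1 - ((w̄-1-t)/(w̄-1))·p'. -/

import Mathlib

open Filter Finset

theorem shbf_gen_fpr_limit (p' : ℝ) (hp0 : 0 < p') (hp1 : p' < 1) (t : ℕ)
    (ht : 1 ≤ t) (k : ℕ) (hk : ∃ q : ℕ, k = (t + 1) * q) :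
    Filter.Tendsto
      (fun w : ℝ =>
        (1 - p') ^ ((k : ℝ) / ((t : ℝ) + 1)) *
          (1 / (t : ℝ) * (1 - p') ^ 2 *
              (((1 - p') ^ t - (1 - (w - 1 - t) / (w - 1) * p') ^ t) /
                ((1 - p') - (1 - (w - 1 - t) / (w - 1) * p'))) +
            p' * (1 - (w - 1 - t) / (w - 1) * p') ^ t) ^ ((k : ℝ) / ((t : ℝ) + 1)))
      Filter.atTop (nhds ((1 - p') ^ (k : ℝ))) := by
  set x : ℝ := 1 - p' with hxdef
  have hx : 0 < x := by simp [hxdef]; linarith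
  set b : ℝ → ℝ := fun w => 1 - (w - 1 - t) / (w - 1) * p' with hbdef
  set c : ℝ := (k : ℝ) / ((t : ℝ) + 1) with hcdef
  have htR : (0:ℝ) < t := by exact_mod_cast Nat.lt_of_lt_of_le Nat.zero_lt_one ht
  -- b tends to x
  have hb : Tendsto b atTop (nhds x) := by
    have h0 : Tendsto (fun w : ℝ => (t : ℝ) / (w - 1)) atTop (nhds 0) :=
      Tendsto.div_atTop tendsto_const_nhds (tendsto_atTop_add_const_right _ (-1) tendsto_id)
    have h1 : Tendsto (fun w : ℝ => 1 - (1 - (t : ℝ) / (w - 1)) * p') atTop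
        (nhds (1 - (1 - 0) * p')) :=
      tendsto_const_nhds.sub ((tendsto_const_nhds.sub h0).mul tendsto_const_nhds)
    have hxx : (1 : ℝ) - (1 - 0) * p' = x := by simp [hxdef]
    rw [hxx] at h1
    refine h1.congr' ?_
    filter_upwards [eventually_gt_atTop (1:ℝ)] with w hw
    have hw1 : w - 1 ≠ 0 := by linarith
    simp only [hbdef]
    rw [sub_div, div_self hw1]
  -- inner expression tends to x ^ t
  have hG : Continuous (fun y : ℝ =>
      1 / (t : ℝ) * x ^ 2 * (∑ i ∈ range t, x ^ i * y ^ (t - 1 - i)) + p' * y ^ t) := by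
    continuity
  have hGx : (1 / (t : ℝ) * x ^ 2 * (∑ i ∈ range t, x ^ i * x ^ (t - 1 - i)) + p' * x ^ t)
      = x ^ t := by
    have hsum : (∑ i ∈ range t, x ^ i * x ^ (t - 1 - i)) = t * x ^ (t - 1) := by
      rw [Finset.sum_congr rfl fun i hi => ?_, Finset.sum_const, card_range, nsmul_eq_mul]
      rw [← pow_add]
      congr 1
      have : i ≤ t - 1 := Nat.le_sub_one_of_lt (mem_range.mp hi)
      omega
    rw [hsum]
    have h2 : x ^ 2 * x ^ (t - 1) = x ^ (t + 1) := by
      rw [← pow_add]; congr 1; omega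
    have key : 1 / (t:ℝ) * x ^ 2 * ((t:ℝ) * x ^ (t - 1)) = x ^ (t + 1) := by
      calc 1 / (t:ℝ) * x ^ 2 * ((t:ℝ) * x ^ (t - 1))
          = (1 / (t:ℝ) * (t:ℝ)) * (x ^ 2 * x ^ (t - 1)) := by ring
        _ = 1 * x ^ (t + 1) := by
            rw [h2, one_div, inv_mul_cancel₀ (ne_of_gt htR)]
        _ = x ^ (t + 1) := one_mul _
    rw [key, pow_succ]
    have h3 : x ^ t * x + p' * x ^ t = x ^ t * (x + p') := by ring
    rw [h3]
    simp [hxdef]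
  have hinner : Tendsto (fun w : ℝ =>
      1 / (t : ℝ) * x ^ 2 * ((x ^ t - b w ^ t) / (x - b w)) + p' * b w ^ t)
      atTop (nhds (x ^ t)) := by
    have hcomp : Tendsto (fun w : ℝ =>
        1 / (t : ℝ) * x ^ 2 * (∑ i ∈ range t, x ^ i * (b w) ^ (t - 1 - i)) + p' * b w ^ t)
        atTop (nhds (x ^ t)) := by
      have := (hG.tendsto x).comp hb
      rwa [hGx] at this
    refine hcomp.congr' ?_
    filter_upwards [eventually_gt_atTop (1:ℝ)] with w hw
    have hw1 : (0:ℝ) < w - 1 := by linarith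
    have hne : x - b w ≠ 0 := by
      have : x - b w = -((t : ℝ) / (w - 1) * p') := by
        simp only [hbdef, hxdef]
        field_simp
        ring
      rw [this]
      have : (t : ℝ) / (w - 1) * p' > 0 := by positivity
      linarith
    have hgeo := geom_sum₂_mul x (b w) t
    congr 1
    congr 1
    rw [eq_div_iff hne, hgeo]
  -- combine
  have hxt : x ^ t ≠ 0 := by positivity
  have hfin : Tendsto (fun w : ℝ =>
      x ^ c * (1 / (t : ℝ) * x ^ 2 * ((x ^ t - b w ^ t) / (x - b w)) + p' * b w ^ t) ^ c)
      atTop (nhds (x ^ c * (x ^ t : ℝ) ^ c)) :=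
    (hinner.rpow_const (Or.inl hxt)).const_mul _
  have hval : x ^ c * (x ^ t : ℝ) ^ c = x ^ (k : ℝ) := by
    rw [← Real.rpow_natCast x t, ← Real.rpow_mul hx.le, ← Real.rpow_add hx]
    congr 1
    have htne : (t : ℝ) + 1 ≠ 0 := by positivity
    rw [hcdef]
    field_simp
    ring
  rw [hval] at hfin
  exact hfin
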